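/- Let κ be an uncountable cardinal with κ^{<κ} = κ and let G be a group of cardinality κ such that every group of cardinality at most κ is isomorphic to a subgroup of G, and every isomorphism between two subgroups of G each generated by strictly fewer than κ elements extends to an automorphism of G. Then there is no injective continuous group homomorphism from S_∞ into the automorphism group Aut(G) of the group G. -/

import Mathlib

set_option linter.unusedSectionVars false
set_option maxHeartbeats 1000000


theorem Equiv.Perm.inv_apply_self {α : Type*} (f : Equiv.Perm α) (x : α) : f⁻¹ (f x) = x := by
  rw [← Equiv.Perm.mul_apply, inv_mul_cancel, Equiv.Perm.one_apply]

theorem Equiv.Perm.apply_inv_self {α : Type*} (f : Equiv.Perm α) (x : α) : f (f⁻¹ x) = x := by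
  rw [← Equiv.Perm.mul_apply, mul_inv_cancel, Equiv.Perm.one_apply]

namespace NoSinfty

abbrev Q : Type := Option (ℤ × ℤ)

def s0fun : Q → Q
  | none => some (1, 0)
  | some p => if p.2 = 0 then (if p.1 = 0 then none else some (p.1 + 1, 0)) else some p

def s0inv : Q → Q
  | none => some (0, 0)
  | some p => if p.2 = 0 then (if p.1 = 1 then none else some (p.1 - 1, 0)) else some p

lemma s0fun_some (m k : ℤ) :
    s0fun (some (m, k)) = if k = 0 then (if m = 0 then none else some (m + 1, 0)) else some (m, k) := rfl

lemma s0inv_some (m k : ℤ) :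
    s0inv (some (m, k)) = if k = 0 then (if m = 1 then none else some (m - 1, 0)) else some (m, k) := rfl

def s0 : Equiv.Perm Q where
  toFun := s0fun
  invFun := s0inv
  left_inv := by
    rintro (_ | ⟨m, n⟩)
    · rfl
    · rw [s0fun_some]
      by_cases hn : n = 0
      · subst hn
        rw [if_pos rfl]
        by_cases hm : m = 0
        · subst hm; rw [if_pos rfl]; rfl
        · rw [if_neg hm, s0inv_some, if_pos rfl, if_neg (by omega)]
          simp
      · rw [if_neg hn, s0inv_some, if_neg hn]
  right_inv := by
    rintro (_ | ⟨m, n⟩)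
    · rfl
    · rw [s0inv_some]
      by_cases hn : n = 0
      · subst hn
        rw [if_pos rfl]
        by_cases hm : m = 1
        · subst hm; rw [if_pos rfl]; rfl
        · rw [if_neg hm, s0fun_some, if_pos rfl, if_neg (by omega)]
          simp
      · rw [if_neg hn, s0fun_some, if_neg hn]

lemma s0_some (m k : ℤ) :
    s0 (some (m, k)) = if k = 0 then (if m = 0 then none else some (m + 1, 0)) else some (m, k) := rfl
lemma s0_none : s0 none = some (1, 0) := rfl
lemma s0_inv_some (m k : ℤ) :
    s0⁻¹ (some (m, k)) = if k = 0 then (if m = 1 then none else some (m - 1, 0)) else some (m, k) := rfl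
lemma s0_inv_none : s0⁻¹ none = some (0, 0) := rfl

def Aperm : Equiv.Perm Q where
  toFun := fun c => c.map fun p => (p.1, p.2 + 1)
  invFun := fun c => c.map fun p => (p.1, p.2 - 1)
  left_inv := by rintro (_ | ⟨m, n⟩) <;> simp
  right_inv := by rintro (_ | ⟨m, n⟩) <;> simp

lemma Aperm_some (m k : ℤ) : Aperm (some (m, k)) = some (m, k + 1) := rfl
lemma Aperm_none : Aperm none = none := rfl

lemma Apow_some (n : ℕ) (m k : ℤ) : (Aperm ^ n) (some (m, k)) = some (m, k + n) := by
  induction n with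
  | zero => simp
  | succ i ih =>
    rw [pow_succ', Equiv.Perm.mul_apply, ih, Aperm_some]
    congr 2
    push_cast
    ring

lemma Apow_none (n : ℕ) : (Aperm ^ n) none = none := by
  induction n with
  | zero => simp
  | succ i ih => rw [pow_succ', Equiv.Perm.mul_apply, ih, Aperm_none]

lemma Apow_inv_some (n : ℕ) (m k : ℤ) : (Aperm ^ n)⁻¹ (some (m, k)) = some (m, k - n) := by
  have h := Apow_some n m (k - n)
  have h2 : (k - n) + n = k := by ring
  rw [h2] at h
  rw [← h, Equiv.Perm.inv_apply_self]

lemma Apow_inv_none (n : ℕ) : (Aperm ^ n)⁻¹ none = none := by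
  have h := Apow_none n
  conv_lhs => rw [← h]
  rw [Equiv.Perm.inv_apply_self]

def σp (n : ℕ) : Equiv.Perm Q := Aperm ^ n * s0 * (Aperm ^ n)⁻¹

lemma σp_none (n : ℕ) : σp n none = some (1, (n : ℤ)) := by
  simp only [σp, Equiv.Perm.mul_apply, Apow_inv_none, s0_none, Apow_some]
  simp

lemma σp_some (n : ℕ) (m k : ℤ) :
    σp n (some (m, k)) =
      if k = (n : ℤ) then (if m = 0 then none else some (m + 1, (n : ℤ))) else some (m, k) := by
  simp only [σp, Equiv.Perm.mul_apply, Apow_inv_some, s0_some]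
  by_cases hk : k = (n : ℤ)
  · subst hk
    rw [if_pos (by ring), if_pos rfl]
    by_cases hm : m = 0
    · subst hm; rw [if_pos rfl, if_pos rfl, Apow_none]
    · rw [if_neg hm, if_neg hm, Apow_some]
      simp
  · rw [if_neg (by omega), if_neg hk, Apow_some]
    congr 2
    ring

lemma σp_inv_none (n : ℕ) : (σp n)⁻¹ none = some (0, (n : ℤ)) := by
  simp only [σp, mul_inv_rev, inv_inv, Equiv.Perm.mul_apply, Apow_inv_none, s0_inv_none, Apow_some]
  simp

lemma σp_inv_some (n : ℕ) (m k : ℤ) :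
    (σp n)⁻¹ (some (m, k)) =
      if k = (n : ℤ) then (if m = 1 then none else some (m - 1, (n : ℤ))) else some (m, k) := by
  simp only [σp, mul_inv_rev, inv_inv, Equiv.Perm.mul_apply, Apow_inv_some, s0_inv_some]
  by_cases hk : k = (n : ℤ)
  · subst hk
    rw [if_pos (by ring), if_pos rfl]
    by_cases hm : m = 1
    · subst hm; rw [if_pos rfl, if_pos rfl, Apow_none]
    · rw [if_neg hm, if_neg hm, Apow_some]
      simp
  · rw [if_neg (by omega), if_neg hk, Apow_some]
    congr 2
    ring


universe v

variable {H : Type v} [Group H]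

/-- Left regular representation. -/
def ρreg : H →* Equiv.Perm H := MulAction.toPermHom H H

lemma ρreg_apply (h p : H) : ρreg h p = h * p := rfl

lemma ρreg_injective : Function.Injective (ρreg (H := H)) := by
  intro a b hab
  have := congrArg (fun π : Equiv.Perm H => π 1) hab
  simpa [ρreg_apply] using this

/-- Lift of a permutation of `Q` to the product. -/
def ΛU : Equiv.Perm Q →* Equiv.Perm (ULift.{v} Q × H) :=
  MonoidHom.mk' (fun π => Equiv.prodCongr (Equiv.ulift.symm.permCongr π) (Equiv.refl H))
    (by
      intro a b
      ext ⟨⟨c⟩, p⟩ <;> rfl)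

lemma ΛU_apply (π : Equiv.Perm Q) (c : Q) (p : H) :
    ΛU π (⟨c⟩, p) = (⟨π c⟩, p) := rfl

/-- Fiberwise (column-wise) permutation. -/
def DU (d : Q → Equiv.Perm H) : Equiv.Perm (ULift.{v} Q × H) :=
  Equiv.prodShear (Equiv.refl (ULift.{v} Q)) (fun c => d c.down)

lemma DU_apply (d : Q → Equiv.Perm H) (c : Q) (p : H) :
    DU d (⟨c⟩, p) = (⟨c⟩, d c p) := rfl

lemma DU_mul (d₁ d₂ : Q → Equiv.Perm H) :
    DU d₁ * DU d₂ = DU (fun c => d₁ c * d₂ c) := by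
  ext ⟨⟨c⟩, p⟩ <;> rfl

lemma DU_one : DU (fun _ : Q => (1 : Equiv.Perm H)) = 1 := by
  ext ⟨⟨c⟩, p⟩ <;> rfl

lemma DU_inv (d : Q → Equiv.Perm H) : (DU d)⁻¹ = DU (fun c => (d c)⁻¹) := by
  apply inv_eq_of_mul_eq_one_right
  rw [DU_mul]
  simp [DU_one]

lemma DU_conj (π : Equiv.Perm Q) (d : Q → Equiv.Perm H) :
    ΛU π * DU d * (ΛU π)⁻¹ = DU (fun c => d (π⁻¹ c)) := by
  rw [← map_inv]
  apply Equiv.ext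
  rintro ⟨⟨c⟩, p⟩
  simp only [Equiv.Perm.mul_apply]
  rw [ΛU_apply, DU_apply, ΛU_apply, DU_apply, Equiv.Perm.apply_inv_self]

/-- The embedding of `H` at the cell `(1,0)`. -/
def jemb : H →* Equiv.Perm (ULift.{v} Q × H) :=
  MonoidHom.mk' (fun h => DU (fun c => if c = some (1, 0) then ρreg h else 1))
    (by
      intro a b
      show DU _ = DU _ * DU _
      rw [DU_mul]
      congr 1
      funext c
      by_cases hc : c = some (1, 0) <;> simp [hc, map_mul])

lemma jemb_injective : Function.Injective (jemb (H := H)) := by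
  intro a b hab
  have := congrArg (fun π : Equiv.Perm (ULift.{v} Q × H) => π (⟨some (1, 0)⟩, 1)) hab
  simp only [jemb, MonoidHom.mk'_apply, DU_apply, if_pos rfl] at this
  apply ρreg_injective
  ext p
  have h1 : ρreg a 1 = ρreg b 1 := by
    simpa [DU_apply] using congrArg Prod.snd this
  simp only [ρreg_apply, mul_one] at h1
  simp [ρreg_apply, h1]

variable (cc : ℕ → H)

/-- The diagonal sequence encoding the enumeration `cc`. -/
def γ0 : Q → Equiv.Perm H := fun c =>
  match c with
  | none => 1
  | some p => if 1 ≤ p.1 ∧ 0 ≤ p.2 then ρreg (cc p.2.toNat) else 1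

lemma γ0_none : γ0 cc none = 1 := rfl
lemma γ0_some (m k : ℤ) :
    γ0 cc (some (m, k)) = if 1 ≤ m ∧ 0 ≤ k then ρreg (cc k.toNat) else 1 := rfl

lemma dn_eq (n : ℕ) (c : Q) :
    γ0 cc ((σp n)⁻¹ c) * (γ0 cc c)⁻¹ =
      if c = some (1, (n : ℤ)) then (ρreg (cc n))⁻¹ else 1 := by
  rcases c with _ | ⟨m, k⟩
  · rw [σp_inv_none, γ0_none, γ0_some, if_neg (by omega)]
    simp
  · rw [σp_inv_some]
    by_cases hk : k = (n : ℤ)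
    · subst hk
      rw [if_pos rfl]
      by_cases hm : m = 1
      · subst hm
        rw [if_pos rfl, γ0_none, γ0_some, if_pos ⟨le_refl _, by omega⟩]
        simp [Int.toNat_natCast]
      · rw [if_neg hm, γ0_some, γ0_some,
            if_neg (show ¬(some (m, (n : ℤ)) = some (1, (n : ℤ))) by simp [hm])]
        by_cases h2 : 2 ≤ m
        · rw [if_pos (show (1:ℤ) ≤ m - 1 ∧ (0:ℤ) ≤ (n:ℤ) from ⟨by omega, by omega⟩),
              if_pos (show (1:ℤ) ≤ m ∧ (0:ℤ) ≤ (n:ℤ) from ⟨by omega, by omega⟩)]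
          simp
        · rw [if_neg (show ¬((1:ℤ) ≤ m - 1 ∧ (0:ℤ) ≤ (n:ℤ)) from fun h => by omega),
              if_neg (show ¬((1:ℤ) ≤ m ∧ (0:ℤ) ≤ (n:ℤ)) from fun h => by omega)]
          simp
    · rw [if_neg hk, if_neg (by simp [hk])]
      simp

lemma key_eq (n : ℕ) :
    (ΛU (Aperm ^ n))⁻¹ * (ΛU (σp n) * DU (γ0 cc) * (ΛU (σp n))⁻¹ * (DU (γ0 cc))⁻¹) *
        ΛU (Aperm ^ n) = (jemb (cc n))⁻¹ := by
  rw [DU_conj, DU_inv, DU_mul]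
  have h2 := DU_conj (H := H) ((Aperm ^ n)⁻¹)
      (fun c => γ0 cc ((σp n)⁻¹ c) * (γ0 cc c)⁻¹)
  rw [map_inv] at h2
  simp only [inv_inv] at h2
  rw [h2]
  have h3 : (fun c => γ0 cc ((σp n)⁻¹ ((Aperm ^ n) c)) * (γ0 cc ((Aperm ^ n) c))⁻¹)
      = fun c => if c = some (1, 0) then (ρreg (cc n))⁻¹ else 1 := by
    funext c
    rw [dn_eq]
    rcases c with _ | ⟨m, k⟩
    · rw [Apow_none, if_neg (by simp), if_neg (by simp)]
    · rw [Apow_some]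
      by_cases h : m = 1 ∧ k = 0
      · obtain ⟨rfl, rfl⟩ := h
        rw [if_pos (by simp), if_pos rfl]
      · have h1 : ¬(some (m, k + (n : ℤ)) = some (1, (n : ℤ))) := by
          simp only [Option.some.injEq, Prod.mk.injEq]
          rintro ⟨rfl, hk⟩
          exact h ⟨rfl, by omega⟩
        have h2' : ¬(some (m, k) = some ((1 : ℤ), (0 : ℤ))) := by
          simp only [Option.some.injEq, Prod.mk.injEq]
          rintro ⟨rfl, rfl⟩
          exact h ⟨rfl, rfl⟩
        rw [if_neg h1, if_neg h2']
  rw [h3]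
  have h4 : jemb (cc n) = DU (fun c => if c = some (1, 0) then ρreg (cc n) else 1) := rfl
  rw [h4, DU_inv]
  congr 1
  funext c
  by_cases hc : c = some (1, 0) <;> simp [hc]

lemma jemb_mem_closure (hcc : Function.Surjective cc) (h : H) :
    jemb h ∈ Subgroup.closure {ΛU Aperm, ΛU s0, DU (γ0 cc)} := by
  obtain ⟨n, rfl⟩ := hcc h
  set S : Set (Equiv.Perm (ULift.{v} Q × H)) := {ΛU Aperm, ΛU s0, DU (γ0 cc)} with hS
  have hA : ΛU (Aperm ^ n) ∈ Subgroup.closure S := by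
    rw [map_pow]
    exact pow_mem (Subgroup.subset_closure (by simp [hS])) n
  have hs : ΛU s0 ∈ Subgroup.closure S := Subgroup.subset_closure (by simp [hS])
  have hγ : DU (γ0 cc) ∈ Subgroup.closure S := Subgroup.subset_closure (by simp [hS])
  have hσ : ΛU (σp n) ∈ Subgroup.closure S := by
    rw [σp, map_mul, map_mul, map_inv]
    exact mul_mem (mul_mem hA hs) (inv_mem hA)
  have hmem : (ΛU (Aperm ^ n))⁻¹ * (ΛU (σp n) * DU (γ0 cc) * (ΛU (σp n))⁻¹ * (DU (γ0 cc))⁻¹) *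
      ΛU (Aperm ^ n) ∈ Subgroup.closure S :=
    mul_mem (mul_mem (inv_mem hA)
      (mul_mem (mul_mem (mul_mem hσ hγ) (inv_mem hσ)) (inv_mem hγ))) hA
  rw [key_eq] at hmem
  simpa using inv_mem hmem

lemma aux_embed (H : Type v) [Group H] [Countable H] :
    ∃ (b₁ b₂ b₃ : Equiv.Perm (ULift.{v} Q × H)) (j : H →* Equiv.Perm (ULift.{v} Q × H)),
      Function.Injective j ∧ ∀ h : H, j h ∈ Subgroup.closure {b₁, b₂, b₃} := by
  obtain ⟨cc, hcc⟩ := exists_surjective_nat H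
  exact ⟨ΛU Aperm, ΛU s0, DU (γ0 cc), jemb, jemb_injective,
    fun h => jemb_mem_closure cc hcc h⟩

end NoSinfty


namespace NoSinfty

lemma countable_closure_set {G : Type*} [Group G] {X : Set G} (hX : X.Countable) :
    (Subgroup.closure X : Set G).Countable := by
  have hXinv : (X⁻¹).Countable := by
    rw [← Set.image_inv_eq_inv]
    exact hX.image _
  have hXu : (X ∪ X⁻¹).Countable := hX.union hXinv
  have hmono : (Subgroup.closure X : Set G) ⊆
      List.prod '' {l : List G | ∀ x ∈ l, x ∈ X ∪ X⁻¹} := by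
    intro x hx
    have hx1 : x ∈ (Subgroup.closure X).toSubmonoid := by
      rw [Subgroup.mem_toSubmonoid]
      exact hx
    rw [Subgroup.closure_toSubmonoid] at hx1
    have hx2 : x ∈ (Submonoid.closure (X ∪ X⁻¹) : Set G) := hx1
    rw [Submonoid.closure_eq_image_prod] at hx2
    exact hx2
  refine Set.Countable.mono hmono (Set.Countable.image ?_ _)
  haveI := hXu.to_subtype
  have hsub : {l : List G | ∀ x ∈ l, x ∈ X ∪ X⁻¹} ⊆
      Set.range (fun l : List ↥(X ∪ X⁻¹) => l.map Subtype.val) := by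
    intro l hl
    refine ⟨List.pmap (fun x hx => (⟨x, hx⟩ : ↥(X ∪ X⁻¹))) l hl, ?_⟩
    simp only [List.map_pmap]
    rw [List.pmap_eq_map]
    exact List.map_id l
  exact Set.Countable.mono hsub (Set.countable_range _)

end NoSinfty



/-- The topology of pointwise convergence on the permutation group of a set `V`
(regarded as a discrete space): the topology induced from the product topology
on `V → V` where `V` carries the discrete topology. -/
instance permPointwiseTopology (V : Type*) : TopologicalSpace (Equiv.Perm V) :=
  TopologicalSpace.induced (fun g : Equiv.Perm V => (g : V → V))
    (@Pi.topologicalSpace V (fun _ => V) (fun _ => ⊥))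

/-- The topology of pointwise convergence on the automorphism group of a group `G`
(regarded as a discrete set): the topology induced from the product topology on `G → G`
where `G` carries the discrete topology. -/
instance mulAutPointwiseTopology (G : Type*) [Group G] : TopologicalSpace (MulAut G) :=
  TopologicalSpace.induced (fun g : MulAut G => (g : G → G))
    (@Pi.topologicalSpace G (fun _ => G) (fun _ => ⊥))

open Cardinal in
/-- Let `κ` be an uncountable cardinal with `κ^{<κ} = κ` and let `G` be a group of
cardinality `κ` such that every group of cardinality at most `κ` is isomorphic to a
subgroup of `G` and every isomorphism between two subgroups of `G`, each generated by
strictly fewer than `κ` elements, extends to an automorphism of `G`. Then there is no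
injective continuous group homomorphism from `S_∞ = Equiv.Perm ℕ` (with the pointwise
convergence topology) into `Aut(G)` (with the pointwise convergence topology). -/
theorem no_continuous_embedding_of_Sinfty_into_randomGroupAut
    {G : Type u} [Group G] (κ : Cardinal.{u})
    (hκ : Cardinal.aleph0 < κ) (hpow : κ ^< κ = κ)
    (hcard : #G = κ)
    (huniv : ∀ (H : Type u) [Group H], #H ≤ κ →
      ∃ K : Subgroup G, Nonempty (H ≃* K))
    (hhom : ∀ A B : Subgroup G,
      (∃ S : Set G, #S < κ ∧ Subgroup.closure S = A) →
      (∃ S : Set G, #S < κ ∧ Subgroup.closure S = B) →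
      ∀ f : A ≃* B, ∃ g : MulAut G, ∀ a : A, g (a : G) = (f a : G)) :
    ¬ ∃ e : Equiv.Perm ℕ →* MulAut G,
        Function.Injective e ∧ Continuous e := by
  rintro ⟨e, einj, econt⟩
  -- Step 1: continuity gives finite supports.
  have hstab : ∀ x : G, ∃ F : Finset ℕ,
      ∀ σ : Equiv.Perm ℕ, (∀ i ∈ F, σ i = i) → e σ x = x := by
    intro x
    have hV : @IsOpen (G → G) (@Pi.topologicalSpace G (fun _ => G) (fun _ => ⊥))
        ((fun f : G → G => f x) ⁻¹' {x}) := by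
      letI : TopologicalSpace G := ⊥
      haveI : DiscreteTopology G := discreteTopology_bot G
      exact IsOpen.preimage (continuous_apply x) (isOpen_discrete {x})
    have hU : IsOpen {φ : MulAut G | φ x = x} :=
      (isOpen_induced_iff (f := fun g : MulAut G => (g : G → G))
        (t := @Pi.topologicalSpace G (fun _ => G) (fun _ => ⊥))).mpr
        ⟨(fun f : G → G => f x) ⁻¹' {x}, hV, rfl⟩
    have hopen := econt.isOpen_preimage _ hU
    obtain ⟨W, hWopen, hWeq⟩ :=
      (isOpen_induced_iff (f := fun g : Equiv.Perm ℕ => (g : ℕ → ℕ))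
        (t := @Pi.topologicalSpace ℕ (fun _ => ℕ) (fun _ => ⊥))).mp hopen
    have hid : (id : ℕ → ℕ) ∈ W := by
      have h1 : (1 : Equiv.Perm ℕ) ∈ e ⁻¹' {φ : MulAut G | φ x = x} := by
        simp only [Set.mem_preimage, map_one, Set.mem_setOf_eq]
        rfl
      rw [← hWeq] at h1
      simpa using h1
    letI : TopologicalSpace ℕ := ⊥
    obtain ⟨I, u, hu, hsub⟩ := (isOpen_pi_iff.mp hWopen) _ hid
    refine ⟨I, fun σ hσ => ?_⟩
    have hσW : (σ : ℕ → ℕ) ∈ W := by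
      apply hsub
      intro i hi
      rw [hσ i hi]
      exact (hu i hi).2
    have hmem : σ ∈ (fun g : Equiv.Perm ℕ => (g : ℕ → ℕ)) ⁻¹' W := hσW
    rw [hWeq] at hmem
    exact hmem
  choose F hF using hstab
  -- Step 2: swaps of fresh points and witnesses moved by them.
  set sw : Finset ℕ → Equiv.Perm ℕ :=
    fun s => Equiv.swap (s.sup id + 1) (s.sup id + 2) with hswdef
  have hswfix : ∀ s : Finset ℕ, ∀ i ∈ s, sw s i = i := by
    intro s i hi
    have hle : i ≤ s.sup id := Finset.le_sup (f := id) hi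
    exact Equiv.swap_apply_of_ne_of_ne (by omega) (by omega)
  have hwit : ∀ s : Finset ℕ, ∃ g : G, e (sw s) g ≠ g := by
    intro s
    by_contra hcon
    push_neg at hcon
    have h1 : e (sw s) = 1 := by
      apply DFunLike.ext
      intro g
      exact hcon g
    have h2 : sw s = 1 := einj (by rw [h1, map_one])
    have h3 := congrArg (fun π : Equiv.Perm ℕ => π (s.sup id + 1)) h2
    simp only [hswdef, Equiv.swap_apply_left, Equiv.Perm.coe_one, id_eq] at h3
    omega
  choose w hw using hwit
  set X : Set G := Set.range w with hXdef
  have hXc : X.Countable := Set.countable_range w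
  have hHsc : ((Subgroup.closure X : Subgroup G) : Set G).Countable :=
    NoSinfty.countable_closure_set hXc
  haveI : Countable ↥(Subgroup.closure X) := hHsc.to_subtype
  -- Step 3: embed the countable subgroup into a 3-generated permutation group.
  obtain ⟨b₁, b₂, b₃, j, hjinj, hjmem⟩ := NoSinfty.aux_embed ↥(Subgroup.closure X)
  have hBcard : #(Equiv.Perm (ULift.{u} NoSinfty.Q × ↥(Subgroup.closure X))) ≤ κ := by
    set Y := ULift.{u} NoSinfty.Q × ↥(Subgroup.closure X)
    have h1 : #(Equiv.Perm Y) ≤ #(Y → Y) :=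
      Cardinal.mk_le_of_injective (f := fun (π : Equiv.Perm Y) => (π : Y → Y))
        (fun a b hab => Equiv.coe_fn_injective hab)
    have h2 : #(Y → Y) = #Y ^ #Y := (Cardinal.power_def Y Y).symm
    have hYle : #Y ≤ ℵ₀ := Cardinal.mk_le_aleph0
    have h3 : #Y ^ #Y ≤ ℵ₀ ^ (ℵ₀ : Cardinal) :=
      le_trans (Cardinal.power_le_power_right hYle)
        (Cardinal.power_le_power_left Cardinal.aleph0_ne_zero hYle)
    have h4 : (ℵ₀ : Cardinal) ^ (ℵ₀ : Cardinal) = 2 ^ (ℵ₀ : Cardinal) :=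
      Cardinal.power_self_eq le_rfl
    have h5 : (2 : Cardinal) ^ (ℵ₀ : Cardinal) ≤ κ ^ (ℵ₀ : Cardinal) := by
      apply Cardinal.power_le_power_right
      have : (2 : Cardinal) ≤ ℵ₀ := by
        exact_mod_cast (Cardinal.nat_lt_aleph0 2).le
      exact this.trans hκ.le
    have h6 : κ ^ (ℵ₀ : Cardinal) ≤ κ ^< κ := Cardinal.le_powerlt κ hκ
    calc #(Equiv.Perm Y) ≤ #(Y → Y) := h1
      _ = #Y ^ #Y := h2
      _ ≤ ℵ₀ ^ (ℵ₀ : Cardinal) := h3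
      _ = 2 ^ (ℵ₀ : Cardinal) := h4
      _ ≤ κ ^ (ℵ₀ : Cardinal) := h5
      _ ≤ κ ^< κ := h6
      _ = κ := hpow
  obtain ⟨K, ⟨ψ⟩⟩ := huniv _ hBcard
  set Φ : Equiv.Perm (ULift.{u} NoSinfty.Q × ↥(Subgroup.closure X)) →* G :=
    K.subtype.comp ψ.toMonoidHom with hΦdef
  have hΦinj : Function.Injective Φ := K.subtype_injective.comp ψ.injective
  set χ : ↥(Subgroup.closure X) →* G := Φ.comp j with hχdef
  have hχinj : Function.Injective χ := hΦinj.comp hjinj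
  -- Step 4: use homogeneity to pull the three generators into G over the closure.
  have genHs : ∃ S : Set G, #S < κ ∧ Subgroup.closure S = Subgroup.closure X := by
    refine ⟨X, ?_, rfl⟩
    haveI := hXc.to_subtype
    exact lt_of_le_of_lt Cardinal.mk_le_aleph0 hκ
  have genA : ∃ S : Set G, #S < κ ∧ Subgroup.closure S = χ.range := by
    refine ⟨⇑χ '' (Subtype.val ⁻¹' X), ?_, ?_⟩
    · haveI : Countable ↥(⇑χ '' (Subtype.val ⁻¹' X)) :=
        ((Set.to_countable _).image _).to_subtype
      exact lt_of_le_of_lt Cardinal.mk_le_aleph0 hκ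
    · rw [← MonoidHom.map_closure, Subgroup.closure_closure_coe_preimage,
        ← MonoidHom.range_eq_map]
  obtain ⟨g, hg⟩ := hhom χ.range (Subgroup.closure X) genA genHs
    (MonoidHom.ofInjective hχinj).symm
  -- Step 5: every element of X lies in the subgroup generated by three elements.
  have hcont : ∀ x ∈ X,
      x ∈ Subgroup.closure {g (Φ b₁), g (Φ b₂), g (Φ b₃)} := by
    intro x hx
    have hxHs : x ∈ Subgroup.closure X := Subgroup.subset_closure hx
    set Ψ : Equiv.Perm (ULift.{u} NoSinfty.Q × ↥(Subgroup.closure X)) →* G :=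
      (MulEquiv.toMonoidHom (g : G ≃* G)).comp Φ with hΨdef
    have h1 : j ⟨x, hxHs⟩ ∈ Subgroup.closure {b₁, b₂, b₃} := hjmem _
    have h2 : Ψ (j ⟨x, hxHs⟩) ∈ Subgroup.map Ψ (Subgroup.closure {b₁, b₂, b₃}) :=
      Subgroup.mem_map_of_mem Ψ h1
    rw [MonoidHom.map_closure] at h2
    have himg : (⇑Ψ '' {b₁, b₂, b₃} : Set G) = {Ψ b₁, Ψ b₂, Ψ b₃} := by
      simp [Set.image_insert_eq]
    rw [himg] at h2
    have h3 : Ψ (j ⟨x, hxHs⟩) = g (χ ⟨x, hxHs⟩) := rfl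
    have h4 : g (χ ⟨x, hxHs⟩) = x := by
      have hmem : χ ⟨x, hxHs⟩ ∈ χ.range := ⟨⟨x, hxHs⟩, rfl⟩
      have h5 := hg ⟨χ ⟨x, hxHs⟩, hmem⟩
      have h6 : (MonoidHom.ofInjective hχinj).symm ⟨χ ⟨x, hxHs⟩, hmem⟩ = ⟨x, hxHs⟩ := by
        rw [MulEquiv.symm_apply_eq]
        rfl
      rw [h6] at h5
      exact h5
    rw [h3, h4] at h2
    have hΨb : ∀ b, Ψ b = g (Φ b) := fun b => rfl
    rwa [hΨb b₁, hΨb b₂, hΨb b₃] at h2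
  -- Step 6: final contradiction.
  set y₁ : G := g (Φ b₁)
  set y₂ : G := g (Φ b₂)
  set y₃ : G := g (Φ b₃)
  set FF : Finset ℕ := (F y₁ ∪ F y₂) ∪ F y₃ with hFFdef
  have hfix1 : e (sw FF) y₁ = y₁ :=
    hF y₁ (sw FF) (fun i hi => hswfix FF i (by simp [hFFdef, hi]))
  have hfix2 : e (sw FF) y₂ = y₂ :=
    hF y₂ (sw FF) (fun i hi => hswfix FF i (by simp [hFFdef, hi]))
  have hfix3 : e (sw FF) y₃ = y₃ :=
    hF y₃ (sw FF) (fun i hi => hswfix FF i (by simp [hFFdef, hi]))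
  have heqon : Set.EqOn ⇑(MulEquiv.toMonoidHom (e (sw FF) : G ≃* G)) ⇑(MonoidHom.id G)
      ({y₁, y₂, y₃} : Set G) := by
    intro z hz
    rcases hz with rfl | rfl | rfl
    · exact hfix1
    · exact hfix2
    · exact hfix3
  have hfixX := MonoidHom.eqOn_closure heqon (hcont (w FF) ⟨FF, rfl⟩)
  exact hw FF hfixX
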